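/- Let G be a finite group. The category of sheaves of sets on the orbit category O(G) equipped with the atomic topology is equivalent to the category G-Set of right G-sets. Explicitly, the functor sending a right G-set M to the presheaf H\G ↦ Hom_{G-Set}(H\G, M) is an equivalence onto the sheaf category, with quasi-inverse sending a sheaf F to the G-set F(1\G). -/

import Mathlib

open CategoryTheory

/-! ## Basic site-theoretic notions -/

/-- The Ore condition: any cospan can be completed to a commutative square. -/
def OreCondition (C : Type*) [Category C] : Prop :=
  ∀ ⦃x y z : C⦄ (f : y ⟶ x) (g : z ⟶ x),
    ∃ (w : C) (p : w ⟶ y) (q : w ⟶ z), p ≫ f = q ≫ g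

/-- A Grothendieck topology is the atomic topology iff its covering sieves are
exactly the nonempty sieves. -/
def IsAtomicTopology {C : Type*} [Category C] (J : GrothendieckTopology C) : Prop :=
  ∀ (x : C) (S : Sieve x), S ∈ J x ↔ ∃ (y : C) (f : y ⟶ x), S f

/-- The presieve on `c` consisting of all morphisms with domain `c₀`. -/
def domPresieve {C : Type*} [Category C] (c₀ : C) (c : C) : Presieve c :=
  fun Y => {_f | Y = c₀}

/-! ## Right `G`-sets and the orbit category -/

/-- The category of right `G`-sets, realized as presheaves of sets on the
one-object category of `G`. -/
abbrev GSet (G : Type) [Group G] := (SingleObj G)ᵒᵖ ⥤ Type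

variable {G : Type} [Group G]

/-- The right coset space `H\G` as a right `G`-set (`G` acting by right
multiplication). -/
def cosetGSet (H : Subgroup G) : GSet G where
  obj _ := Quotient (QuotientGroup.rightRel H)
  map f := TypeCat.ofHom (Quotient.map' (fun x => x * f.unop)
    (fun a b hab => by
      rw [QuotientGroup.rightRel_apply] at hab ⊢
      simpa only [mul_inv_rev, mul_assoc, mul_inv_cancel_left] using hab))
  map_id _ := by
    apply TypeCat.homEquiv.injective
    funext q
    refine Quotient.inductionOn' q fun a => ?_
    exact congrArg (Quotient.mk _) (mul_one a)
  map_comp f g := by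
    apply TypeCat.homEquiv.injective
    funext q
    refine Quotient.inductionOn' q fun a => ?_
    exact congrArg (Quotient.mk _) (mul_assoc a f.unop g.unop).symm

/-- The orbit category `O(G)`: the full subcategory of right `G`-sets on the
coset spaces `H\G`, indexed by the subgroups of `G`. -/
abbrev OrbitCat (G : Type) [Group G] := InducedCategory (GSet G) (cosetGSet (G := G))

/-- For `a ∈ G`, the `G`-map `c_a : 1\G → 1\G`, `k ↦ a * k`. -/
def botAuto (a : G) : cosetGSet (⊥ : Subgroup G) ⟶ cosetGSet (⊥ : Subgroup G) where
  app _ := TypeCat.ofHom (Quotient.map' (fun k => a * k)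
    (fun x y hxy => by
      rw [QuotientGroup.rightRel_apply] at hxy ⊢
      rw [Subgroup.mem_bot] at hxy ⊢
      rw [mul_inv_rev, ← mul_assoc, mul_assoc a, hxy]
      simp))
  naturality X Y f := by
    apply TypeCat.homEquiv.injective
    funext q
    refine Quotient.inductionOn' q fun k => ?_
    exact congrArg (Quotient.mk _) (mul_assoc a k f.unop).symm

/-- The functor from the one-object category of `G` to the orbit category with
value `1\G`, sending `a` to `c_a`; it makes `F(1\G)` a right `G`-set for any
presheaf `F` on the orbit category. -/
def orbitBotIota (G : Type) [Group G] : SingleObj G ⥤ OrbitCat G where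
  obj _ := (⊥ : Subgroup G)
  map a := InducedCategory.homMk (botAuto a)
  map_id _ := by
    ext X q
    refine Quotient.inductionOn' q fun k => ?_
    exact congrArg (Quotient.mk _) (one_mul k)
  map_comp {x y z} a b := by
    ext X q
    refine Quotient.inductionOn' q fun k => ?_
    exact congrArg (Quotient.mk _) (mul_assoc b a k)

/-! ## The transporter category of a `G`-poset -/

/-- The transporter category `P ⋊ G` of a `G`-poset `P`: objects are those of
`P`, and morphisms `x ⟶ y` are elements `g ∈ G` with `g • x ≤ y`. -/
@[ext] structure Transporter (G : Type) (P : Type) where pt : P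

instance Transporter.category (G P : Type) [Group G] [PartialOrder P] [MulAction G P]
    [CovariantClass G P (· • ·) (· ≤ ·)] : Category (Transporter G P) where
  Hom x y := { g : G // g • x.pt ≤ y.pt }
  id x := ⟨1, by simp⟩
  comp {x y z} f g := ⟨g.1 * f.1, by
    rw [mul_smul]
    exact le_trans (CovariantClass.elim g.1 f.2) g.2⟩
  id_comp f := Subtype.ext (mul_one _)
  comp_id f := Subtype.ext (one_mul _)
  assoc f g h := Subtype.ext (mul_assoc h.1 g.1 f.1).symm

variable {P : Type} [PartialOrder P] [MulAction G P]
    [CovariantClass G P (· • ·) (· ≤ ·)]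

theorem smul_le_smul_act (g : G) {a b : P} (h : a ≤ b) : g • a ≤ g • b :=
  CovariantClass.elim g h

/-- An initial (i.e. bottom) element of a `G`-poset is fixed by `G`. -/
theorem smul_bot_eq {x₀ : P} (hbot : ∀ x : P, x₀ ≤ x) (g : G) : g • x₀ = x₀ :=
  le_antisymm (by simpa using smul_le_smul_act g (hbot (g⁻¹ • x₀))) (hbot _)

/-- The endomorphism `(g, id)` of the initial object `x₀` of `P ⋊ G`. -/
def gmor {x₀ : P} (hbot : ∀ x : P, x₀ ≤ x) (g : G) :
    (⟨x₀⟩ : Transporter G P) ⟶ (⟨x₀⟩ : Transporter G P) :=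
  ⟨g, le_of_eq (smul_bot_eq hbot g)⟩

theorem gmor_comp {x₀ : P} (hbot : ∀ x : P, x₀ ≤ x) (a b : G) :
    gmor (G := G) hbot b ≫ gmor hbot a = gmor hbot (a * b) := rfl

theorem gmor_one {x₀ : P} (hbot : ∀ x : P, x₀ ≤ x) :
    gmor (G := G) hbot (1 : G) = 𝟙 (⟨x₀⟩ : Transporter G P) := rfl

/-- The projection functor `π : P ⋊ G ⥤ G`. -/
def piFunctor (G P : Type) [Group G] [PartialOrder P] [MulAction G P]
    [CovariantClass G P (· • ·) (· ≤ ·)] : Transporter G P ⥤ SingleObj G where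
  obj _ := SingleObj.star G
  map f := f.1
  map_id _ := rfl
  map_comp _ _ := rfl

/-! ## Quotients of transporter categories and fixed-point presheaves -/

variable {C : Type} [SmallCategory C]

section
variable (ρ : Transporter G P ⥤ C) {x₀ : P} (hbot : ∀ x : P, x₀ ≤ x)

/-- `Hom_C(x₀, c)` as a right `G`-set, with `f · g := ρ(g, id) ≫ f`. -/
def homGSet (c : C) : GSet G where
  obj _ := (ρ.obj ⟨x₀⟩ ⟶ c)
  map f := TypeCat.ofHom fun φ => ρ.map (gmor hbot f.unop) ≫ φ
  map_id _ := by
    apply TypeCat.homEquiv.injective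
    funext φ
    show ρ.map (gmor hbot (1 : G)) ≫ φ = φ
    rw [gmor_one, ρ.map_id, Category.id_comp]
  map_comp {X Y Z} f g := by
    apply TypeCat.homEquiv.injective
    funext φ
    show ρ.map (gmor hbot (f.unop * g.unop)) ≫ φ =
      ρ.map (gmor hbot g.unop) ≫ ρ.map (gmor hbot f.unop) ≫ φ
    rw [← gmor_comp, ρ.map_comp, Category.assoc]

/-- Postcomposition `Hom_C(x₀, c) → Hom_C(x₀, c')` with `φ : c ⟶ c'`, as a map
of right `G`-sets. -/
def homGSetMap {c c' : C} (φ : c ⟶ c') : homGSet ρ hbot c ⟶ homGSet ρ hbot c' where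
  app _ := TypeCat.ofHom fun f => (show ρ.obj ⟨x₀⟩ ⟶ c from f) ≫ φ
  naturality X Y f := by
    apply TypeCat.homEquiv.injective
    funext ψ
    show (ρ.map (gmor hbot f.unop) ≫ (show ρ.obj ⟨x₀⟩ ⟶ c from ψ)) ≫ φ =
      ρ.map (gmor hbot f.unop) ≫ ((show ρ.obj ⟨x₀⟩ ⟶ c from ψ) ≫ φ)
    exact Category.assoc _ _ _

theorem homGSetMap_id (c : C) : homGSetMap ρ hbot (𝟙 c) = 𝟙 (homGSet ρ hbot c) := by
  ext X f
  exact Category.comp_id f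

theorem homGSetMap_comp {c c' c'' : C} (φ : c ⟶ c') (ψ : c' ⟶ c'') :
    homGSetMap ρ hbot (φ ≫ ψ) = homGSetMap ρ hbot φ ≫ homGSetMap ρ hbot ψ := by
  ext X f
  exact (Category.assoc _ _ _).symm

/-- The fixed-point presheaf `F_M : x ↦ Hom_{G-Set}(Hom_C(x₀, x), M)` on `C`. -/
def fixedPointPresheaf (M : GSet G) : Cᵒᵖ ⥤ Type where
  obj c := homGSet ρ hbot c.unop ⟶ M
  map {c c'} ψ := TypeCat.ofHom fun η => homGSetMap ρ hbot ψ.unop ≫ η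
  map_id c := by
    apply TypeCat.homEquiv.injective
    funext η
    show homGSetMap ρ hbot (𝟙 c.unop) ≫ η = η
    rw [homGSetMap_id, Category.id_comp]
  map_comp {c c' c''} ψ ψ' := by
    apply TypeCat.homEquiv.injective
    funext η
    show homGSetMap ρ hbot (ψ'.unop ≫ ψ.unop) ≫ η = _
    rw [homGSetMap_comp, Category.assoc]
    rfl

/-- The right `G`-set `𝔊(x₀)` attached to a presheaf `𝔊` on `C`: `g ∈ G`
acts as `𝔊(ρ(g, id))`. -/
def evalGSet (𝔊 : Cᵒᵖ ⥤ Type) : GSet G where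
  obj _ := 𝔊.obj (Opposite.op (ρ.obj ⟨x₀⟩))
  map f := 𝔊.map (ρ.map (gmor hbot f.unop)).op
  map_id _ := by
    show 𝔊.map (ρ.map (gmor hbot (1 : G))).op = _
    rw [gmor_one, ρ.map_id]
    exact 𝔊.map_id _
  map_comp {X Y Z} f g := by
    show 𝔊.map (ρ.map (gmor hbot (f.unop * g.unop))).op = _
    rw [← gmor_comp, ρ.map_comp, op_comp, 𝔊.map_comp]

end

/-- `ρ : P⋊G ⥤ C` is a category extension: it is bijective on objects,
surjective on morphism sets, the kernel groups `K(y)` act freely by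
postcomposition on hom sets, and `ρ` exactly identifies the `K(y)`-orbits of
morphisms, i.e. `K(y)\Hom(x, y) ≅ Hom_C(ρx, ρy)`. -/
structure IsCatExtension (ρ : Transporter G P ⥤ C) : Prop where
  bij_obj : Function.Bijective ρ.obj
  surj_map : ∀ {x y : Transporter G P} (f : ρ.obj x ⟶ ρ.obj y), ∃ u : x ⟶ y, ρ.map u = f
  free : ∀ {y : Transporter G P} (α : y ⟶ y), ρ.map α = 𝟙 (ρ.obj y) →
    ∀ {x : Transporter G P} (u : x ⟶ y), u ≫ α = u → α = 𝟙 y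
  fiber : ∀ {x y : Transporter G P} (u u' : x ⟶ y),
    ρ.map u = ρ.map u' ↔ ∃ α : y ⟶ y, ρ.map α = 𝟙 (ρ.obj y) ∧ u ≫ α = u'

/-! ## The transporter category `T(G)` on subgroups -/

/-- The transporter category `T(G)`: objects are the subgroups of `G`,
morphisms `H ⟶ K` are elements `g ∈ G` with `gHg⁻¹ ≤ K`. -/
@[ext] structure TransporterCat (G : Type) [Group G] where sub : Subgroup G

instance TransporterCat.category (G : Type) [Group G] : Category (TransporterCat G) where
  Hom H K := { g : G // ∀ h ∈ H.sub, g * h * g⁻¹ ∈ K.sub }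
  id H := ⟨1, fun h hh => by simpa using hh⟩
  comp {H K L} f g := ⟨g.1 * f.1, fun h hh => by
    have hmem := g.2 _ (f.2 h hh)
    have heq : g.1 * (f.1 * h * f.1⁻¹) * g.1⁻¹ = (g.1 * f.1) * h * (g.1 * f.1)⁻¹ := by group
    rwa [heq] at hmem⟩
  id_comp f := Subtype.ext (mul_one _)
  comp_id f := Subtype.ext (one_mul _)
  assoc f g h := Subtype.ext (mul_assoc h.1 g.1 f.1).symm

/-- The conjugate subgroup `gHg⁻¹`. -/
def conjSubgroup (g : G) (H : Subgroup G) : Subgroup G :=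
  H.map (MulAut.conj g).toMonoidHom

lemma conjSubgroup_inv_mem {g : G} {H : Subgroup G} {w : G}
    (hw : w ∈ conjSubgroup g H) : g⁻¹ * w * g⁻¹⁻¹ ∈ H := by
  obtain ⟨h, hh, rfl⟩ := hw
  have : g⁻¹ * ((MulAut.conj g).toMonoidHom h) * g⁻¹⁻¹ = h := by
    simp [MulAut.conj_apply]; group
  rwa [this]

/-- The `G`-map `H\G → K\G`, `Hk ↦ Kgk`, attached to `g ∈ G` with `gHg⁻¹ ≤ K`. -/
def transToOrbit {H K : Subgroup G} (g : { g : G // ∀ h ∈ H, g * h * g⁻¹ ∈ K }) :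
    cosetGSet H ⟶ cosetGSet K where
  app _ := TypeCat.ofHom (Quotient.map' (fun k => g.1 * k)
    (fun a b hab => by
      rw [QuotientGroup.rightRel_apply] at hab ⊢
      have := g.2 _ hab
      have heq : g.1 * (b * a⁻¹) * g.1⁻¹ = (g.1 * b) * (g.1 * a)⁻¹ := by group
      rwa [heq] at this))
  naturality X Y f := by
    apply TypeCat.homEquiv.injective
    funext q
    refine Quotient.inductionOn' q fun k => ?_
    exact congrArg (Quotient.mk _) (mul_assoc g.1 k f.unop).symm

/-- The setoid on `{g : G // gHg⁻¹ ≤ K}` whose classes are right cosets `Kg`. -/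
def transSetoid (H K : Subgroup G) : Setoid { g : G // ∀ h ∈ H, g * h * g⁻¹ ∈ K } where
  r a b := a.1 * b.1⁻¹ ∈ K
  iseqv := by
    constructor
    · intro a; simpa using K.one_mem
    · intro a b h
      simpa using K.inv_mem h
    · intro a b c h1 h2
      have := K.mul_mem h1 h2
      simpa [mul_assoc] using this

/-! ## The coset space `H\G` as a discrete `G`-poset -/

/-- The coset space `H\G` as a discretely ordered `G`-poset, with `g` acting
by `Hk ↦ Hkg⁻¹`. -/
def CosetPoset (G : Type) [Group G] (H : Subgroup G) :=
  Quotient (QuotientGroup.rightRel H)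

instance (H : Subgroup G) : PartialOrder (CosetPoset G H) where
  le x y := x = y
  le_refl _ := rfl
  le_trans _ _ _ h h' := Eq.trans h h'
  le_antisymm _ _ h _ := h

instance (H : Subgroup G) : MulAction G (CosetPoset G H) where
  smul g := Quotient.map' (fun k => k * g⁻¹)
    (fun a b hab => by
      rw [QuotientGroup.rightRel_apply] at hab ⊢
      simpa [mul_assoc] using hab)
  one_smul q := by
    refine Quotient.inductionOn' q fun k => ?_
    exact congrArg (Quotient.mk _) (by simp)
  mul_smul a b q := by
    refine Quotient.inductionOn' q fun k => ?_
    exact congrArg (Quotient.mk _) (by simp [mul_assoc])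

instance (H : Subgroup G) : CovariantClass G (CosetPoset G H) (· • ·) (· ≤ ·) where
  elim g x y h := le_of_eq (congrArg (g • ·) (le_antisymm h (Eq.symm h : y ≤ x)))

/-! ## Underlying `G`-set of a right `RG`-module -/

/-- The underlying right `G`-set of a right `RG`-module. -/
noncomputable def UGSet (R : Type) [CommRing R]
    (M : ModuleCat (MonoidAlgebra R G)ᵐᵒᵖ) : GSet G where
  obj _ := M
  map f := TypeCat.ofHom fun m => (MulOpposite.op (MonoidAlgebra.single f.unop (1 : R))) • m
  map_id _ := by
    apply TypeCat.homEquiv.injective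
    funext m
    show (MulOpposite.op (MonoidAlgebra.single (1 : G) (1 : R))) • m = m
    rw [← MonoidAlgebra.one_def, MulOpposite.op_one, one_smul]
  map_comp {X Y Z} f g := by
    apply TypeCat.homEquiv.injective
    funext m
    show (MulOpposite.op (MonoidAlgebra.single (f.unop * g.unop) (1 : R))) • m =
      (MulOpposite.op (MonoidAlgebra.single g.unop (1 : R))) •
        ((MulOpposite.op (MonoidAlgebra.single f.unop (1 : R))) • m)
    rw [smul_smul, ← MulOpposite.op_mul, MonoidAlgebra.single_mul_single, one_mul]


/-! ## Auxiliary machinery for the main theorem -/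

namespace OrbitSheafAux

open Opposite

variable {G : Type} [Group G]

/-- shorthand for class of `a` in `H\G` -/
abbrev qk (H : Subgroup G) (a : G) : Quotient (QuotientGroup.rightRel H) :=
  Quotient.mk'' a

lemma qk_eq_qk {H : Subgroup G} {a b : G} : qk H a = qk H b ↔ b * a⁻¹ ∈ H := by
  rw [qk, qk, Quotient.eq'']
  exact QuotientGroup.rightRel_apply

/-- the morphism `k ↦ k` in `(SingleObj G)ᵒᵖ` attached to `k : G`. -/
def gop {X Y : (SingleObj G)ᵒᵖ} (k : G) : X ⟶ Y :=
  Quiver.Hom.op (show Y.unop ⟶ X.unop from k)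

lemma gop_comp {X Y Z : (SingleObj G)ᵒᵖ} (a b : G) :
    (gop a : X ⟶ Y) ≫ (gop b : Y ⟶ Z) = gop (a * b) := rfl

lemma gop_one {X : (SingleObj G)ᵒᵖ} : (gop 1 : X ⟶ X) = 𝟙 X := rfl

lemma gop_unop {X Y : (SingleObj G)ᵒᵖ} (k : G) : (gop (X := X) (Y := Y) k).unop = k := rfl

lemma eq_gop_unop {X Y : (SingleObj G)ᵒᵖ} (g : X ⟶ Y) : g = gop g.unop := rfl

lemma cosetGSet_map_qk {H : Subgroup G} {X Y : (SingleObj G)ᵒᵖ} (g : X ⟶ Y) (a : G) :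
    (cosetGSet H).map g (qk H a) = qk H (a * g.unop) := rfl

lemma botAuto_app_qk (a : G) (X : (SingleObj G)ᵒᵖ) (k : G) :
    (botAuto a).app X (qk ⊥ k) = qk ⊥ (a * k) := rfl

/-- the projection `1\G → H\G`. -/
def piH (H : Subgroup G) : cosetGSet (⊥ : Subgroup G) ⟶ cosetGSet H where
  app _ := TypeCat.ofHom (Quotient.map' id (fun a b hab => by
    rw [QuotientGroup.rightRel_apply] at hab ⊢
    simpa [Subgroup.mem_bot.mp hab] using H.one_mem))
  naturality X Y f := by
    apply TypeCat.homEquiv.injective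
    funext q
    induction q using Quotient.inductionOn' with
    | h a => rfl

/-- the `G`-map `1\G → H\G`, `k ↦ H a k`. -/
def ell (H : Subgroup G) (a : G) : cosetGSet (⊥ : Subgroup G) ⟶ cosetGSet H :=
  botAuto a ≫ piH H

lemma ell_app {H : Subgroup G} (a : G) (X : (SingleObj G)ᵒᵖ) (k : G) :
    (ell H a).app X (qk ⊥ k) = qk H (a * k) := rfl

lemma ell_bot (a : G) : ell (⊥ : Subgroup G) a = botAuto a := by
  ext X q
  induction q using Quotient.inductionOn' with
  | h k => rfl

/-- evaluation of a `G`-map out of a coset `G`-set. -/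
lemma app_eval {H : Subgroup G} {M : GSet G} (σ : cosetGSet H ⟶ M)
    (X Y : (SingleObj G)ᵒᵖ) (b k : G) :
    σ.app Y (qk H (b * k)) = M.map (gop (X := X) (Y := Y) k) (σ.app X (qk H b)) := by
  have h := NatTrans.naturality_apply σ (gop (X := X) (Y := Y) k) (qk H b)
  rw [cosetGSet_map_qk, gop_unop] at h
  exact h

lemma app_eval' {H : Subgroup G} {M : GSet G} (σ : cosetGSet H ⟶ M)
    (X Y : (SingleObj G)ᵒᵖ) (k : G) :
    σ.app Y (qk H k) = M.map (gop (X := X) (Y := Y) k) (σ.app X (qk H 1)) := by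
  have := app_eval σ X Y 1 k
  rwa [one_mul] at this

lemma ell_eq_ell {H : Subgroup G} {a b : G} (h : qk H a = qk H b) :
    ell H a = ell H b := by
  ext X q
  induction q using Quotient.inductionOn' with
  | h k =>
    show qk H (a * k) = qk H (b * k)
    rw [qk_eq_qk] at h ⊢
    simpa [mul_assoc] using h

lemma ell_comp {Y H : Subgroup G} (f : cosetGSet Y ⟶ cosetGSet H)
    {X : (SingleObj G)ᵒᵖ} {b : G} (hb : f.app X (qk Y 1) = qk H b) (a : G) :
    ell Y a ≫ f = ell H (b * a) := by
  ext X' q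
  induction q using Quotient.inductionOn' with
  | h k =>
    show f.app X' ((ell Y a).app X' (qk ⊥ k)) = qk H (b * a * k)
    rw [ell_app]
    rw [app_eval' f X X' (a * k), hb, cosetGSet_map_qk, gop_unop, mul_assoc]

lemma botAuto_comp_ell {H : Subgroup G} (g a : G) :
    botAuto g ≫ ell H a = ell H (a * g) := by
  rw [← ell_bot]
  have : (ell H a).app (op (SingleObj.star G)) (qk ⊥ 1) = qk H (a * 1) := rfl
  rw [ell_comp (ell H a) this g, mul_one]


/-! ### Orbit category plumbing -/

/-- a subgroup as an object of the orbit category -/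
def obO (H : Subgroup G) : OrbitCat G := H

/-- an object of the orbit category as a subgroup -/
def subO (H : OrbitCat G) : Subgroup G := H

/-- a `G`-map of coset spaces as a morphism of the orbit category -/
def mOr {H K : Subgroup G} (f : cosetGSet H ⟶ cosetGSet K) : obO H ⟶ obO K :=
  InducedCategory.homMk f

lemma mOr_comp {H K L : Subgroup G} (f : cosetGSet H ⟶ cosetGSet K)
    (g : cosetGSet K ⟶ cosetGSet L) : mOr (f ≫ g) = mOr f ≫ mOr g := rfl

/-- `ell H a` as a morphism in the orbit category. -/
def eO {H : Subgroup G} (a : G) : obO (⊥ : Subgroup G) ⟶ obO H := mOr (ell H a)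

/-- `botAuto a` as a morphism in the orbit category. -/
def cO (a : G) : obO (⊥ : Subgroup G) ⟶ obO (⊥ : Subgroup G) := mOr (botAuto a)

/-- `piH H` as a morphism in the orbit category. -/
def pO (H : Subgroup G) : obO (⊥ : Subgroup G) ⟶ obO H := mOr (piH H)

lemma cO_comp_eO {H : Subgroup G} (g a : G) : cO g ≫ eO (H := H) a = eO (a * g) :=
  congrArg mOr (botAuto_comp_ell g a)

lemma cO_comp_pO {H : Subgroup G} (a : G) : cO a ≫ pO H = eO (H := H) a := rfl

/-- any nonempty sieve on `H` in the orbit category contains every `eO a`. -/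
lemma sieve_ell {H : Subgroup G} (S : Sieve (obO H)) {Y : OrbitCat G} (f : Y ⟶ obO H)
    (hf : S f) (a : G) : S (eO a) := by
  obtain ⟨b, hb⟩ := Quotient.exists_rep
    (f.hom.app (op (SingleObj.star G))
      (qk Y 1))
  have hcomp : eO (H := Y) (b⁻¹ * a) ≫ f = eO a := by
    show mOr (ell (Y : Subgroup G) (b⁻¹ * a)) ≫ f = eO a
    have : (mOr (ell (Y : Subgroup G) (b⁻¹ * a)) ≫ f : obO ⊥ ⟶ obO H) =
        mOr (ell (Y : Subgroup G) (b⁻¹ * a) ≫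
          f.hom) := rfl
    rw [this, ell_comp _ hb.symm, mul_inv_cancel_left]
    rfl
  have := S.downward_closed hf (eO (H := Y) (b⁻¹ * a))
  exact (congrArg (fun g => S.arrows g) hcomp).mp this

/-! ### The presheaf `H ↦ Hom(H\G, M)` is a sheaf for the atomic topology -/

section SheafPM

variable (J : GrothendieckTopology (OrbitCat G))

/-- a morphism of the orbit category as a `G`-map of coset spaces -/
def asG {H K : OrbitCat G} (f : H ⟶ K) :
    cosetGSet (H : Subgroup G) ⟶ cosetGSet (K : Subgroup G) := f.hom

/-- the value of the presheaf `Hom(-, M)` as a `G`-map -/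
def elG (M : GSet G) {Y : OrbitCat G}
    (e : ((inducedFunctor (cosetGSet (G := G))).op ⋙ yoneda.obj M).obj (op Y)) :
    cosetGSet (Y : Subgroup G) ⟶ M := e

/-- a `G`-map as a value of the presheaf `Hom(-, M)` -/
def geL (M : GSet G) {Y : OrbitCat G} (σ : cosetGSet (Y : Subgroup G) ⟶ M) :
    ((inducedFunctor (cosetGSet (G := G))).op ⋙ yoneda.obj M).obj (op Y) := σ

/-- specialization of `elG` at the bottom subgroup -/
def elB (M : GSet G)
    (e : ((inducedFunctor (cosetGSet (G := G))).op ⋙ yoneda.obj M).obj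
      (op (obO (⊥ : Subgroup G)))) :
    cosetGSet (⊥ : Subgroup G) ⟶ M := e

lemma elG_geL (M : GSet G) {Y : OrbitCat G} (σ : cosetGSet (Y : Subgroup G) ⟶ M) :
    elG M (geL M σ) = σ := rfl

/-- helper: congruence for families of elements -/
lemma fam_congr {P : (OrbitCat G)ᵒᵖ ⥤ Type} {X : OrbitCat G} {S : Sieve X}
    (x : Presieve.FamilyOfElements P S.arrows) {Y : OrbitCat G} {f g : Y ⟶ X}
    (hf : S f) (hg : S g) (h : f = g) : x f hf = x g hg := by
  cases h; rfl

lemma PM_map_eq (M : GSet G) {Y H : OrbitCat G} (f : Y ⟶ H)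
    (e : ((inducedFunctor (cosetGSet (G := G))).op ⋙ yoneda.obj M).obj (op H)) :
    elG M (((inducedFunctor (cosetGSet (G := G))).op ⋙ yoneda.obj M).map f.op e) =
      asG f ≫ elG M e := rfl

variable {M : GSet G} {H : OrbitCat G} {S : Sieve H}
  (x : Presieve.FamilyOfElements
    ((inducedFunctor (cosetGSet (G := G))).op ⋙ yoneda.obj M) S.arrows)

lemma wd_lemma (hell : ∀ a : G, S.arrows (eO (H := (H : Subgroup G)) a))
    (X : (SingleObj G)ᵒᵖ) (a b : G)
    (hab : @Setoid.r G (QuotientGroup.rightRel (H : Subgroup G)) a b) :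
    (elB M (x (eO a) (hell a))).app X (qk ⊥ 1) =
      (elB M (x (eO b) (hell b))).app X (qk ⊥ 1) := by
  have h : eO (H := (H : Subgroup G)) a = eO b :=
    congrArg mOr (ell_eq_ell (_root_.Quotient.sound' hab))
  rw [fam_congr x (hell a) (hell b) h]

/-- the amalgamation of a compatible family -/
def amalgT (hell : ∀ a : G, S.arrows (eO (H := (H : Subgroup G)) a))
    (hx : x.Compatible) : cosetGSet (H : Subgroup G) ⟶ M where
  app X := TypeCat.ofHom fun q => Quotient.liftOn' q
    (fun b => (elB M (x (eO b) (hell b))).app X (qk ⊥ 1)) (wd_lemma x hell X)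
  naturality X X' g := by
    have hx' := hx.to_sieveCompatible
    apply TypeCat.homEquiv.injective
    funext q
    induction q using Quotient.inductionOn' with
    | h b =>
      show (elB M (x (eO (b * g.unop)) (hell _))).app X' (qk ⊥ 1) =
        M.map g ((elB M (x (eO b) (hell b))).app X (qk ⊥ 1))
      have h1 : eO (H := (H : Subgroup G)) (b * g.unop) = cO g.unop ≫ eO b :=
        (cO_comp_eO g.unop b).symm
      rw [fam_congr x (hell _) (S.downward_closed (hell b) (cO g.unop)) h1,
        hx' (eO b) (cO g.unop) (hell b)]
      have he := app_eval' (elB M (x (eO b) (hell b))) X X' g.unop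
      show (elB M (x (eO b) (hell b))).app X' ((botAuto g.unop).app X' (qk ⊥ 1)) =
        M.map g ((elB M (x (eO b) (hell b))).app X (qk ⊥ 1))
      rw [botAuto_app_qk, mul_one, he]
      rfl

theorem isSheaf_PM (hJ : IsAtomicTopology J) (M : GSet G) :
    Presieve.IsSheaf J ((inducedFunctor (cosetGSet (G := G))).op ⋙ yoneda.obj M) := by
  intro H S hS x hx
  obtain ⟨Y, f, hf⟩ := (hJ H S).1 hS
  have hell : ∀ a : G, S.arrows (eO (H := (H : Subgroup G)) a) := fun a =>
    sieve_ell S f hf a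
  have hx' := hx.to_sieveCompatible
  refine ⟨geL M (amalgT x hell hx), ?_, ?_⟩
  · -- amalgamation property
    intro Z f' hf'
    have goal : elG M (((inducedFunctor (cosetGSet (G := G))).op ⋙ yoneda.obj M).map
        f'.op (geL M (amalgT x hell hx))) = elG M (x f' hf') := by
      rw [PM_map_eq, elG_geL]
      ext X q
      induction q using Quotient.inductionOn' with
      | h k =>
        obtain ⟨b, hb⟩ := Quotient.exists_rep ((asG f').app X (qk Z 1))
        have happ : (asG f').app X (qk Z k) = qk H (b * k) := by
          rw [app_eval' (asG f') X X k, ← hb]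
          rfl
        show (amalgT x hell hx).app X ((asG f').app X (qk Z k)) = _
        rw [happ]
        show (elB M (x (eO (b * k)) (hell _))).app X (qk ⊥ 1) = _
        have h1 : eO (H := (H : Subgroup G)) (b * k) =
            eO (H := (Z : Subgroup G)) k ≫ f' := by
          show _ = mOr (ell (Z : Subgroup G) k ≫ asG f')
          rw [ell_comp (asG f') hb.symm k]
          rfl
        rw [fam_congr x (hell _) (S.downward_closed hf' (eO k)) h1,
          hx' f' (eO k) hf']
        show (elG M (x f' hf')).app X ((ell (Z : Subgroup G) k).app X (qk ⊥ 1)) = _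
        rw [ell_app, mul_one]
        rfl
    exact goal
  · -- uniqueness
    intro t ht
    apply NatTrans.ext
    funext X
    apply TypeCat.homEquiv.injective
    funext q
    induction q using Quotient.inductionOn' with
    | h b =>
      have h0 : elG M (((inducedFunctor (cosetGSet (G := G))).op ⋙ yoneda.obj M).map
          (eO (H := (H : Subgroup G)) b).op t) = elB M (x (eO b) (hell b)) :=
        congrArg (elG M) (ht (eO b) (hell b))
      change asG (eO (H := (H : Subgroup G)) b) ≫ elG M t = elB M (x (eO b) (hell b)) at h0
      have h2 : (asG (eO (H := (H : Subgroup G)) b) ≫ elG M t).app X (qk ⊥ 1) =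
          (elB M (x (eO b) (hell b))).app X (qk ⊥ 1) :=
        congrArg (fun σ : cosetGSet (⊥ : Subgroup G) ⟶ M => σ.app X (qk ⊥ 1)) h0
      show (elG M t).app X (qk H b) = (amalgT x hell hx).app X (qk H b)
      have h3 : (elG M t).app X (qk H b) =
          (asG (eO (H := (H : Subgroup G)) b) ≫ elG M t).app X (qk ⊥ 1) := by
        show _ = (elG M t).app X ((ell (H : Subgroup G) b).app X (qk ⊥ 1))
        rw [ell_app, mul_one]
      rw [h3, h2]
      rfl

end SheafPM

/-! ### From sheaves back to `G`-sets: the counit -/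

section Counit

variable (J : GrothendieckTopology (OrbitCat G))

/-- the `G`-set `F(1\G)` attached to a presheaf `F` on the orbit category -/
def psiObj (F : (OrbitCat G)ᵒᵖ ⥤ Type) : GSet G := (orbitBotIota G).op ⋙ F

lemma psiObj_map (F : (OrbitCat G)ᵒᵖ ⥤ Type) {X Y : (SingleObj G)ᵒᵖ} (g : X ⟶ Y) :
    (psiObj F).map g = F.map (cO g.unop).op := rfl

/-- the `G`-map `H\G → F(1\G)` attached to `t ∈ F(H\G)`. -/
def tau (F : (OrbitCat G)ᵒᵖ ⥤ Type) {H : OrbitCat G} (t : F.obj (op H)) :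
    cosetGSet (H : Subgroup G) ⟶ psiObj F where
  app X := TypeCat.ofHom fun q => Quotient.liftOn' q
    (fun a => F.map (eO (H := (H : Subgroup G)) a).op t)
    (fun a b hab => by
      have h : eO (H := (H : Subgroup G)) a = eO b :=
        congrArg mOr (ell_eq_ell (_root_.Quotient.sound' hab))
      show F.map (eO (H := (H : Subgroup G)) a).op t =
        F.map (eO (H := (H : Subgroup G)) b).op t
      rw [h])
  naturality X X' g := by
    apply TypeCat.homEquiv.injective
    funext q
    induction q using Quotient.inductionOn' with
    | h k =>
      show F.map (eO (H := (H : Subgroup G)) (k * g.unop)).op t =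
        (psiObj F).map g (F.map (eO (H := (H : Subgroup G)) k).op t)
      rw [psiObj_map, ← cO_comp_eO g.unop k, op_comp]
      exact F.map_comp_apply _ _ t

lemma tau_app (F : (OrbitCat G)ᵒᵖ ⥤ Type) {H : OrbitCat G} (t : F.obj (op H))
    (X : (SingleObj G)ᵒᵖ) (a : G) :
    (tau F t).app X (qk H a) = F.map (eO (H := (H : Subgroup G)) a).op t := rfl

/-- the covering sieve of all maps factoring through `1\G → H\G` -/
def ellSieve (H : Subgroup G) : Sieve (obO H) where
  arrows Y f := ∃ (u : Y ⟶ obO (⊥ : Subgroup G)) (a : G), u ≫ eO a = f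
  downward_closed := by
    rintro Y Z f ⟨u, a, rfl⟩ g
    exact ⟨g ≫ u, a, (Category.assoc g u (eO a)).symm⟩

lemma ellSieve_mem (hJ : IsAtomicTopology J) (H : Subgroup G) :
    ellSieve H ∈ J (obO H) :=
  (hJ _ _).2 ⟨obO ⊥, eO 1, 𝟙 _, 1, Category.id_comp _⟩

/-- two maps to `1\G` which agree after projecting to `H\G` induce the same map on
an `H`-fixed element. -/
lemma keyWD (P : (OrbitCat G)ᵒᵖ ⥤ Type) {H : Subgroup G}
    (m : P.obj (op (obO (⊥ : Subgroup G))))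
    (hm : ∀ h : G, h ∈ H → P.map (cO h).op m = m)
    {Y : OrbitCat G} (v v' : Y ⟶ obO (⊥ : Subgroup G))
    (hvv : v ≫ pO H = v' ≫ pO H) : P.map v.op m = P.map v'.op m := by
  set X0 : (SingleObj G)ᵒᵖ := op (SingleObj.star G) with hX0
  obtain ⟨c, hc⟩ := Quotient.exists_rep ((asG v).app X0 (qk Y 1))
  obtain ⟨c', hc'⟩ := Quotient.exists_rep ((asG v').app X0 (qk Y 1))
  have h1 : (piH H).app X0 ((asG v).app X0 (qk Y 1)) =
      (piH H).app X0 ((asG v').app X0 (qk Y 1)) :=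
    congrArg (fun σ : Y ⟶ obO H => (asG σ).app X0 (qk Y 1)) hvv
  have hqk : qk H c = qk H c' := by
    have e1 : qk H c = (piH H).app X0 ((asG v).app X0 (qk Y 1)) := by
      rw [← hc]; rfl
    have e2 : qk H c' = (piH H).app X0 ((asG v').app X0 (qk Y 1)) := by
      rw [← hc']; rfl
    rw [e1, e2]; exact h1
  have hmemH : c' * c⁻¹ ∈ H := qk_eq_qk.mp hqk
  have hv' : v' = v ≫ cO (c' * c⁻¹) := by
    apply InducedCategory.hom_ext
    show asG v' = asG v ≫ botAuto (c' * c⁻¹)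
    ext X q
    induction q using Quotient.inductionOn' with
    | h k =>
      have e1 : (asG v').app X (qk Y k) = qk ⊥ (c' * k) := by
        rw [app_eval' (asG v') X0 X k, ← hc']; rfl
      have e2 : (asG v).app X (qk Y k) = qk ⊥ (c * k) := by
        rw [app_eval' (asG v) X0 X k, ← hc]; rfl
      show (asG v').app X (qk Y k) = (botAuto (c' * c⁻¹)).app X ((asG v).app X (qk Y k))
      rw [e1, e2, botAuto_app_qk]
      congr 1
      group
  rw [hv', op_comp, FunctorToTypes.map_comp_apply, hm _ hmemH]

lemma pO_subO (H : OrbitCat G) : pO (subO H) = pO H := rfl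

lemma v_pi {H : Subgroup G} {Y : OrbitCat G} (f : Y ⟶ obO H)
    (hf : (ellSieve H).arrows f) :
    (hf.choose ≫ cO hf.choose_spec.choose) ≫ pO H = f := by
  rw [Category.assoc, cO_comp_pO, hf.choose_spec.choose_spec]

variable {P : (OrbitCat G)ᵒᵖ ⥤ Type}

lemma tau_injective (hJ : IsAtomicTopology J) (hP : Presieve.IsSheaf J P)
    {H : OrbitCat G} (t t' : P.obj (op H)) (h : tau P t = tau P t') : t = t' := by
  have hsep := (hP _ (ellSieve_mem J hJ (H : Subgroup G))).isSeparatedFor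
  apply hsep.ext
  rintro Y f ⟨u, a, rfl⟩
  have hval : ∀ s : P.obj (op H), P.map (u ≫ eO a).op s = P.map u.op (P.map (eO a).op s) := by
    intro s
    rw [op_comp]
    exact P.map_comp_apply _ _ s
  rw [hval t, hval t']
  have := congrArg (fun σ : cosetGSet (H : Subgroup G) ⟶ psiObj P =>
    σ.app (op (SingleObj.star G)) (qk H a)) h
  simp only [tau_app] at this
  rw [this]

lemma tau_surjective (hJ : IsAtomicTopology J) (hP : Presieve.IsSheaf J P)
    {H : OrbitCat G} (σ : cosetGSet (H : Subgroup G) ⟶ psiObj P) :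
    ∃ t : P.obj (op H), tau P t = σ := by
  set X0 : (SingleObj G)ᵒᵖ := op (SingleObj.star G) with hX0
  set m : P.obj (op (obO (⊥ : Subgroup G))) := σ.app X0 (qk H 1) with hm'
  have hfix : ∀ h : G, h ∈ subO H → P.map (cO h).op m = m := by
    intro h hh
    have h1 := app_eval σ X0 X0 1 h
    rw [one_mul] at h1
    have h2 : qk (H : Subgroup G) h = qk H 1 := qk_eq_qk.mpr (by have := inv_mem hh; simp only [one_mul]; exact this)
    rw [h2] at h1
    exact h1.symm
  set x : Presieve.FamilyOfElements P (ellSieve (H : Subgroup G)).arrows := fun Y f hf =>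
    P.map ((hf.choose ≫ cO hf.choose_spec.choose).op) m with hx''
  have hval : ∀ {Y : OrbitCat G} (f : Y ⟶ obO (H : Subgroup G)) (hf) (u : Y ⟶ obO ⊥)
      (a : G), u ≫ eO a = f → x f hf = P.map ((u ≫ cO a).op) m := by
    intro Y f hf u a hu
    apply keyWD P m hfix
    exact (v_pi f hf).trans (hu.symm.trans
      ((congrArg (u ≫ ·) (cO_comp_pO a)).symm.trans (Category.assoc _ _ _).symm))
  have hcomp : x.Compatible := by
    intro Y₁ Y₂ Z g₁ g₂ f₁ f₂ h₁ h₂ hgf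
    have l1 : P.map g₁.op (x f₁ h₁) =
        P.map ((g₁ ≫ (h₁.choose ≫ cO h₁.choose_spec.choose)).op) m := by
      rw [op_comp, FunctorToTypes.map_comp_apply]
    have l2 : P.map g₂.op (x f₂ h₂) =
        P.map ((g₂ ≫ (h₂.choose ≫ cO h₂.choose_spec.choose)).op) m := by
      rw [op_comp, FunctorToTypes.map_comp_apply]
    rw [l1, l2]
    apply keyWD P m hfix
    exact (Category.assoc _ _ _).trans ((congrArg (g₁ ≫ ·) (v_pi f₁ h₁)).trans
      (hgf.trans ((congrArg (g₂ ≫ ·) (v_pi f₂ h₂)).symm.trans (Category.assoc _ _ _).symm)))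
  obtain ⟨t, ht, _⟩ := hP _ (ellSieve_mem J hJ (H : Subgroup G)) x hcomp
  refine ⟨t, ?_⟩
  ext X q
  induction q using Quotient.inductionOn' with
  | h k =>
    show P.map (eO (H := (H : Subgroup G)) k).op t = σ.app X (qk H k)
    have h5 := ht (eO (H := (H : Subgroup G)) k) ⟨𝟙 _, k, Category.id_comp _⟩
    rw [h5]
    refine (hval (eO k) _ (𝟙 _) k (Category.id_comp _)).trans ?_
    rw [Category.id_comp]
    have h6 := app_eval' σ X0 X k
    rw [h6]
    rfl

/-- the canonical comparison map from a presheaf `F` to `Hom(-, F(1\G))`. -/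
def theta (F : (OrbitCat G)ᵒᵖ ⥤ Type) :
    F ⟶ (inducedFunctor (cosetGSet (G := G))).op ⋙ yoneda.obj (psiObj F) where
  app X := TypeCat.ofHom fun t => geL (psiObj F) (tau F t)
  naturality X X' φ := by
    apply TypeCat.homEquiv.injective
    funext t
    show tau F (F.map φ t) =
      asG φ.unop ≫ tau F t
    ext Xs q
    induction q using Quotient.inductionOn' with
    | h k =>
      obtain ⟨b, hb⟩ := Quotient.exists_rep
        ((asG φ.unop).app (op (SingleObj.star G)) (qk X'.unop 1))
      have hb' : (asG φ.unop).app (op (SingleObj.star G)) (qk X'.unop 1) =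
          qk X.unop b := hb.symm
      have hcmp : eO (H := (X'.unop : Subgroup G)) k ≫ φ.unop =
          eO (H := (X.unop : Subgroup G)) (b * k) :=
        congrArg mOr (ell_comp (asG φ.unop) hb' k)
      have happ : (asG φ.unop).app Xs (qk X'.unop k) = qk X.unop (b * k) := by
        rw [app_eval' (asG φ.unop) (op (SingleObj.star G)) Xs k, hb']
        rfl
      show F.map (eO (H := (X'.unop : Subgroup G)) k).op (F.map φ t) =
        (tau F t).app Xs ((asG φ.unop).app Xs (qk X'.unop k))
      rw [happ, tau_app]
      have : φ ≫ (eO (H := (X'.unop : Subgroup G)) k).op =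
          (eO (H := (X.unop : Subgroup G)) (b * k)).op := by
        exact congrArg (fun ψ => ψ.op) hcmp
      exact (F.map_comp_apply _ _ t).symm.trans (congrArg (fun ψ => F.map ψ t) this)

lemma theta_app (F : (OrbitCat G)ᵒᵖ ⥤ Type) {H : OrbitCat G} (t : F.obj (op H)) :
    (theta F).app (op H) t = geL (psiObj F) (tau F t) := rfl

/-- naturality of `theta` in the presheaf -/
lemma theta_natural {F F' : (OrbitCat G)ᵒᵖ ⥤ Type} (α : F ⟶ F') :
    theta F ≫ Functor.whiskerLeft (inducedFunctor (cosetGSet (G := G))).op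
        (yoneda.map (Functor.whiskerLeft (orbitBotIota G).op α)) =
      α ≫ theta F' := by
  ext X t
  show (tau F t ≫ Functor.whiskerLeft (orbitBotIota G).op α :
      cosetGSet ((X.unop : OrbitCat G) : Subgroup G) ⟶ psiObj F') =
    tau F' (α.app X t)
  ext Xs q
  induction q using Quotient.inductionOn' with
  | h k =>
    show α.app (op (obO (⊥ : Subgroup G)))
        (F.map (eO (H := (X.unop : Subgroup G)) k).op t) =
      F'.map (eO (H := (X.unop : Subgroup G)) k).op (α.app X t)
    exact NatTrans.naturality_apply α ((eO (H := (X.unop : Subgroup G)) k).op) t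

end Counit

/-! ### The unit: `M ≅ Hom(1\G, M)` -/

section Unit

/-- the `G`-map `1\G → M` attached to `m ∈ M`. -/
def zeta (M : GSet G) {X : (SingleObj G)ᵒᵖ} (m : M.obj X) :
    cosetGSet (⊥ : Subgroup G) ⟶ M where
  app Y := TypeCat.ofHom fun q => Quotient.liftOn' q (fun k => M.map (gop (X := X) (Y := Y) k) m)
    (fun a b hab => by
      have h : b * a⁻¹ ∈ (⊥ : Subgroup G) := QuotientGroup.rightRel_apply.mp hab
      have : b = a := mul_inv_eq_one.mp (Subgroup.mem_bot.mp h)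
      rw [this])
  naturality Y Y' g := by
    apply TypeCat.homEquiv.injective
    funext q
    induction q using Quotient.inductionOn' with
    | h k =>
      show M.map (gop (k * g.unop)) m = M.map g (M.map (gop (X := X) (Y := Y) k) m)
      rw [← gop_comp, FunctorToTypes.map_comp_apply]
      rfl

lemma zeta_app (M : GSet G) {X Y : (SingleObj G)ᵒᵖ} (m : M.obj X) (k : G) :
    (zeta M m).app Y (qk ⊥ k) = M.map (gop (X := X) (Y := Y) k) m := rfl

lemma zeta_bijective (M : GSet G) (X : (SingleObj G)ᵒᵖ) :
    Function.Bijective (fun m : M.obj X => zeta M m) := by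
  constructor
  · intro m m' h
    have h1 := congrArg (fun σ : cosetGSet (⊥ : Subgroup G) ⟶ M =>
      σ.app X (qk ⊥ 1)) h
    simp only [zeta_app] at h1
    rwa [gop_one, FunctorToTypes.map_id_apply, FunctorToTypes.map_id_apply] at h1
  · intro σ
    refine ⟨σ.app X (qk ⊥ 1), ?_⟩
    ext Y q
    induction q using Quotient.inductionOn' with
    | h k =>
      show M.map (gop (X := X) (Y := Y) k) (σ.app X (qk ⊥ 1)) = σ.app Y (qk ⊥ k)
      rw [app_eval' σ X Y k]

end Unit

/-! ### The functors and the equivalence -/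

section Main

variable (J : GrothendieckTopology (OrbitCat G)) (hJ : IsAtomicTopology J)

/-- the functor `G-Set ⥤ Sh(O(G))`, `M ↦ Hom(-, M)` -/
def phiF : GSet G ⥤ Sheaf J Type where
  obj M := ⟨(inducedFunctor (cosetGSet (G := G))).op ⋙ yoneda.obj M,
    (isSheaf_iff_isSheaf_of_type J _).2 (isSheaf_PM J hJ M)⟩
  map φ := ⟨Functor.whiskerLeft (inducedFunctor (cosetGSet (G := G))).op (yoneda.map φ)⟩
  map_id M := by
    apply Sheaf.hom_ext
    show Functor.whiskerLeft _ (yoneda.map (𝟙 M)) = _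
    rw [CategoryTheory.Functor.map_id]
    rfl
  map_comp φ ψ := by
    apply Sheaf.hom_ext
    show Functor.whiskerLeft _ (yoneda.map (φ ≫ ψ)) = _
    rw [Functor.map_comp]
    rfl

/-- the functor `Sh(O(G)) ⥤ G-Set`, `F ↦ F(1\G)` -/
def psiF : Sheaf J Type ⥤ GSet G where
  obj F := (orbitBotIota G).op ⋙ F.val
  map α := Functor.whiskerLeft (orbitBotIota G).op α.hom
  map_id F := rfl
  map_comp α β := rfl

/-- the unit component `M ⟶ Hom(1\G, M)` -/
def unitT (M : GSet G) :
    M ⟶ (phiF J hJ ⋙ psiF J).obj M where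
  app X := TypeCat.ofHom fun m => geL M (zeta M m)
  naturality X X' g := by
    apply TypeCat.homEquiv.injective
    funext m
    show zeta M (M.map g m) = botAuto g.unop ≫ zeta M m
    ext Y q
    induction q using Quotient.inductionOn' with
    | h k =>
      show M.map (gop (X := X') (Y := Y) k) (M.map g m) =
        (zeta M m).app Y ((botAuto g.unop).app Y (qk ⊥ k))
      rw [botAuto_app_qk, zeta_app, ← FunctorToTypes.map_comp_apply]
      rfl

/-- the unit isomorphism -/
noncomputable def unitIso : 𝟭 (GSet G) ≅ phiF J hJ ⋙ psiF J := by
  refine NatIso.ofComponents (fun M => ?_) (fun {M N} φ => ?_)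
  · haveI : ∀ X, IsIso ((unitT J hJ M).app X) := fun X =>
      (isIso_iff_bijective _).2 (zeta_bijective M X)
    haveI : IsIso (unitT J hJ M) := NatIso.isIso_of_isIso_app _
    exact asIso (unitT J hJ M)
  · ext X m
    show zeta N (φ.app X m) = zeta M m ≫ φ
    ext Y q
    induction q using Quotient.inductionOn' with
    | h k =>
      show N.map (gop (X := X) (Y := Y) k) (φ.app X m) =
        φ.app Y ((zeta M m).app Y (qk ⊥ k))
      rw [zeta_app]
      exact (NatTrans.naturality_apply φ (gop k) m).symm

/-- the counit component as a morphism of sheaves -/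
def thetaS (F : Sheaf J Type) : F ⟶ (psiF J ⋙ phiF J hJ).obj F :=
  ⟨theta F.val⟩

include hJ in
lemma theta_app_bij (F : Sheaf J Type) (X : (OrbitCat G)ᵒᵖ) :
    Function.Bijective ((theta F.val).app X) := by
  have hP : Presieve.IsSheaf J F.val := (isSheaf_iff_isSheaf_of_type J _).1 F.cond
  constructor
  · intro t t' h
    exact tau_injective J hJ hP t t' h
  · intro σ
    obtain ⟨t, ht⟩ := tau_surjective J hJ hP (elG (psiObj F.val) σ)
    exact ⟨t, ht⟩

/-- the counit isomorphism -/
noncomputable def counitIso : psiF J ⋙ phiF J hJ ≅ 𝟭 (Sheaf J Type) := by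
  refine (NatIso.ofComponents (fun F => ?_) (fun {F F'} α => ?_)).symm
  · haveI : ∀ X, IsIso ((theta F.val).app X) := fun X =>
      (isIso_iff_bijective _).2 (theta_app_bij J hJ F X)
    haveI i1 : IsIso (theta F.val) := NatIso.isIso_of_isIso_app _
    haveI i2 : IsIso ((sheafToPresheaf J Type).map (thetaS J hJ F)) := i1
    haveI : IsIso (thetaS J hJ F) :=
      isIso_of_reflects_iso _ (sheafToPresheaf J Type)
    exact asIso (thetaS J hJ F)
  · apply Sheaf.hom_ext
    exact (theta_natural α.hom).symm

set_option maxHeartbeats 1000000 in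
/-- the equivalence -/
noncomputable def mainEquiv : GSet G ≌ Sheaf J Type :=
  CategoryTheory.Equivalence.mk (phiF J hJ) (psiF J) (unitIso J hJ) (counitIso J hJ)

end Main
end OrbitSheafAux


/-- **Artin, Mac Lane–Moerdijk.** For a finite group `G`, the category of sheaves
of sets on the orbit category `O(G)` with the atomic topology is equivalent to the
category of right `G`-sets: the functor `M ↦ (H\G ↦ Hom_{G-Set}(H\G, M))` is an
equivalence onto the sheaf category, with quasi-inverse `F ↦ F(1\G)`. -/
theorem sheaves_on_orbit_category_equiv_gSet (G : Type) [Group G] [Finite G]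
    (J : GrothendieckTopology (OrbitCat G)) (hJ : IsAtomicTopology J) :
    ∃ E : GSet G ≌ Sheaf J Type,
      (∀ M : GSet G,
        Nonempty ((sheafToPresheaf J Type).obj (E.functor.obj M) ≅
          (inducedFunctor (cosetGSet (G := G))).op ⋙ yoneda.obj M)) ∧
      (∀ F : Sheaf J Type,
        Nonempty (E.inverse.obj F ≅ (orbitBotIota G).op ⋙ F.val)) := by
  exact ⟨OrbitSheafAux.mainEquiv J hJ, fun _ => ⟨Iso.refl _⟩, fun _ => ⟨Iso.refl _⟩⟩
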